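/- Let T be a tree rooted at r with a shadow-closed link set E, and let F ⊆ E be a shadows-minimal feasible cover of T. Let v ≠ r be a vertex such that the subtree T_v has exactly three leaves a, b, c, the subtree T_v contains no stem, ab ∈ E, and T_v is c-closed. If ab ∈ F, then Σ_{x ∈ T_v ∖ L} deg_F(x) ≥ 2. -/

import Mathlib

open scoped Classical

/-- The set of tree edges lying on a path (necessarily the unique one in a tree)
between `u` and `v`. -/
def pathEdges {V : Type*} (T : SimpleGraph V) (u v : V) : Set (Sym2 V) :=
  {e | ∃ p : T.Walk u v, p.IsPath ∧ e ∈ p.edges}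

/-- The set of vertices lying on a path between `u` and `v`. -/
def pathSupport {V : Type*} (T : SimpleGraph V) (u v : V) : Set V :=
  {w | ∃ p : T.Walk u v, p.IsPath ∧ w ∈ p.support}

/-- The link `l` covers the tree edge `e` : `e` lies on the tree path between the
endpoints of `l`. -/
def Covers {V : Type*} (T : SimpleGraph V) (l e : Sym2 V) : Prop :=
  ∃ u v, l = s(u, v) ∧ e ∈ pathEdges T u v

/-- A set `F` of links covers the tree `T` (is feasible): every edge of `T` is covered
by some link of `F`. -/
def CoversTree {V : Type*} (T : SimpleGraph V) (F : Set (Sym2 V)) : Prop :=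
  ∀ e ∈ T.edgeSet, ∃ l ∈ F, Covers T l e

/-- `x` belongs to the subtree `T_v` of `T` rooted at `r`:
`v` lies on the tree path from `x` to the root `r`. -/
def InSubtree {V : Type*} (T : SimpleGraph V) (r v x : V) : Prop :=
  v ∈ pathSupport T x r

/-- A leaf is a vertex with exactly one neighbour (degree one). -/
def IsLeaf {V : Type*} (T : SimpleGraph V) (v : V) : Prop :=
  ∃! w, T.Adj v w

/-- `y` is the parent of `x` in the tree `T` rooted at `r`. -/
def IsParent {V : Type*} (T : SimpleGraph V) (r x y : V) : Prop :=
  T.Adj x y ∧ InSubtree T r y x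

/-- `w` is the least common ancestor of `u` and `v` in the tree `T` rooted at `r`. -/
def IsLCA {V : Type*} (T : SimpleGraph V) (r u v w : V) : Prop :=
  w ∈ pathSupport T u v ∧ w ∈ pathSupport T u r ∧ w ∈ pathSupport T v r

/-- The link `cd` is a shadow of the link `ab`: the tree path between `c` and `d` is a
strict subpath of the tree path between `a` and `b`. -/
def IsShadow {V : Type*} (T : SimpleGraph V) (c d a b : V) : Prop :=
  c ≠ d ∧ pathEdges T c d ⊂ pathEdges T a b

/-- The link set `E` is shadow-closed: every shadow of a link of `E` belongs to `E`. -/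
def ShadowClosed {V : Type*} (T : SimpleGraph V) (E : Finset (Sym2 V)) : Prop :=
  ∀ a b c d, s(a, b) ∈ E → IsShadow T c d a b → s(c, d) ∈ E

/-- `F ⊆ E` is a shadows-minimal feasible solution: it is a minimum-cardinality cover of
`T` among subsets of `E`, and replacing any link of `F` by one of its shadows renders it
infeasible. -/
def ShadowsMinimal {V : Type*} (T : SimpleGraph V) (E F : Finset (Sym2 V)) : Prop :=
  F ⊆ E ∧ CoversTree T ↑F ∧
    (∀ F' : Finset (Sym2 V), F' ⊆ E → CoversTree T ↑F' → F.card ≤ F'.card) ∧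
    ∀ a b c d, s(a, b) ∈ F → IsShadow T c d a b →
      ¬ CoversTree T ↑(insert s(c, d) (F.erase s(a, b)))

/-- `deg_F(x)`: the number of links of `F` incident to `x`. -/
noncomputable def degF {V : Type*} (F : Finset (Sym2 V)) (x : V) : ℕ :=
  (F.filter (fun e => x ∈ e)).card

/-- `s` is a stem with twin link `ab`: an internal vertex whose children are exactly the
two leaves `a` and `b`, with `ab ∈ E`. -/
def IsStem {V : Type*} (T : SimpleGraph V) (r : V) (E : Finset (Sym2 V)) (s a b : V) : Prop :=
  a ≠ b ∧ ¬ IsLeaf T s ∧ IsLeaf T a ∧ IsLeaf T b ∧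
    IsParent T r a s ∧ IsParent T r b s ∧
    (∀ x, IsParent T r x s → x = a ∨ x = b) ∧ s(a, b) ∈ E

/-- The subtree `T_v` is `x`-closed: every link of `E` incident to `x` has both endpoints
in `T_v`. -/
def XClosed {V : Type*} (T : SimpleGraph V) (r : V) (E : Finset (Sym2 V)) (v x : V) : Prop :=
  ∀ l ∈ E, x ∈ l → ∀ y ∈ l, InSubtree T r v y

/-- The subtree `T_v` is leaf-closed: it is `x`-closed for every leaf `x ∈ L_v`. -/
def LeafClosed {V : Type*} (T : SimpleGraph V) (r : V) (E : Finset (Sym2 V)) (v : V) : Prop :=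
  ∀ x, IsLeaf T x → InSubtree T r v x → XClosed T r E v x

/-- The subtree `T_v` is minimally leaf-closed: it is leaf-closed and no subtree rooted
at a strict descendant of `v` is leaf-closed. -/
def MinLeafClosed {V : Type*} (T : SimpleGraph V) (r : V) (E : Finset (Sym2 V)) (v : V) : Prop :=
  LeafClosed T r E v ∧ ∀ u, InSubtree T r v u → u ≠ v → ¬ LeafClosed T r E u

/-- `ax` is an up-link of the leaf `a`: a link of `E` incident to `a` whose least common
ancestor with `a` is closest to the root among all links of `E` incident to `a`. -/
def IsUpLink {V : Type*} (T : SimpleGraph V) (r : V) (E : Finset (Sym2 V)) (a x : V) : Prop :=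
  s(a, x) ∈ E ∧ ∀ y w w', s(a, y) ∈ E → IsLCA T r a x w → IsLCA T r a y w' →
    T.dist w r ≤ T.dist w' r

/-- A matching: a set of links (pairs of distinct vertices) no two of which share an
endpoint. -/
def IsMatching {V : Type*} (M : Finset (Sym2 V)) : Prop :=
  (∀ l ∈ M, ¬ l.IsDiag) ∧ ∀ l ∈ M, ∀ l' ∈ M, l ≠ l' → ∀ x, x ∈ l → x ∉ l'

section Helpers

open SimpleGraph Walk

variable {V : Type*} {T : SimpleGraph V}

lemma path_unique (hT : T.IsTree) {u v : V} {p q : T.Walk u v} (hp : p.IsPath)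
    (hq : q.IsPath) : p = q :=
  (hT.existsUnique_path u v).unique hp hq

lemma exists_path (hT : T.IsTree) (u v : V) : ∃ p : T.Walk u v, p.IsPath :=
  (hT.existsUnique_path u v).exists

lemma mem_pathEdges_iff (hT : T.IsTree) {u v : V} {p : T.Walk u v} (hp : p.IsPath)
    {e : Sym2 V} : e ∈ pathEdges T u v ↔ e ∈ p.edges := by
  constructor
  · rintro ⟨q, hq, he⟩; rwa [path_unique hT hq hp] at he
  · exact fun he => ⟨p, hp, he⟩

lemma pathEdges_comm (u v : V) : pathEdges T u v = pathEdges T v u := by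
  ext e
  constructor <;> rintro ⟨p, hp, he⟩ <;>
    exact ⟨p.reverse, hp.reverse, by simpa [Walk.edges_reverse] using he⟩

/-- An interior vertex of a path is not a leaf. -/
lemma interior_not_leaf {u w x : V} (p : T.Walk u w) (hp : p.IsPath)
    (hx : x ∈ p.support) (hxu : x ≠ u) (hxw : x ≠ w) : ¬ IsLeaf T x := by
  rintro ⟨n, hn, hn'⟩
  have hA : (p.takeUntil x hx).IsPath := hp.takeUntil hx
  have hB : (p.dropUntil x hx).IsPath := hp.dropUntil hx
  obtain ⟨y₂, h₂, B', hB'⟩ := Walk.exists_eq_cons_of_ne hxw (p.dropUntil x hx)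
  obtain ⟨y₁, h₁, A', hA'⟩ := Walk.exists_eq_cons_of_ne hxu (p.takeUntil x hx).reverse
  have e₁ : s(x, y₁) ∈ (p.takeUntil x hx).edges := by
    have : s(x, y₁) ∈ (p.takeUntil x hx).reverse.edges := by rw [hA']; simp
    simpa [Walk.edges_reverse] using this
  have e₂ : s(x, y₂) ∈ (p.dropUntil x hx).edges := by rw [hB']; simp
  have hy₁ : y₁ = n := hn' _ h₁
  have hy₂ : y₂ = n := hn' _ h₂
  have hnodup : ((p.takeUntil x hx).edges ++ (p.dropUntil x hx).edges).Nodup := by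
    rw [← Walk.edges_append, Walk.take_spec]
    exact hp.isTrail.edges_nodup
  exact (List.nodup_append'.mp hnodup).2.2 e₁ (by rw [hy₁, ← hy₂]; exact e₂)

/-- In a path starting with the edge `xy`, the only edge containing the head `x`
is `s(x,y)`. -/
lemma head_edge {x y w : V} (h : T.Adj x y) (q : T.Walk y w)
    (hp : (Walk.cons h q).IsPath) {e : Sym2 V} (he : e ∈ (Walk.cons h q).edges)
    (hx : x ∈ e) : e = s(x, y) := by
  rw [Walk.edges_cons] at he
  rcases List.mem_cons.mp he with he | he
  · exact he
  · exfalso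
    obtain ⟨z, rfl⟩ := Sym2.mem_iff_exists.mp hx
    exact ((Walk.cons_isPath_iff h q).mp hp).2 (q.fst_mem_support_of_mem_edges he)

section Boundary

variable {r v v' : V}

/-- If a path from `v` contains the edge to the parent `v'` of `v`, its endpoint is
outside the subtree `T_v`. -/
lemma not_inSubtree_of_edge (hT : T.IsTree) (hvv' : T.Adj v v') {R : T.Walk v' r}
    (hPR : (Walk.cons hvv' R).IsPath) {q : V} (B : T.Walk v q) (hB : B.IsPath)
    (he : s(v, v') ∈ B.edges) : ¬ InSubtree T r v q := by
  cases B with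
  | nil => simp at he
  | @cons _ y₂ _ h' B'' =>
    have hy₂ : y₂ = v' := by
      have := head_edge h' B'' hB (e := s(v, v')) he (by simp)
      exact Sym2.congr_right.mp this.symm
    subst hy₂
    have hvB : v ∉ B''.support := ((Walk.cons_isPath_iff h' B'').mp hB).2
    have hvR : v ∉ R.support := ((Walk.cons_isPath_iff hvv' R).mp hPR).2
    rintro ⟨P, hP, hvP⟩
    have hPeq : P = (B''.reverse.append R).bypass :=
      path_unique hT hP (B''.reverse.append R).bypass_isPath
    have : v ∈ (B''.reverse.append R).support :=
      (B''.reverse.append R).support_bypass_subset (hPeq ▸ hvP)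
    rw [Walk.mem_support_append_iff] at this
    rcases this with h | h
    · exact hvB (by simpa [Walk.support_reverse] using h)
    · exact hvR h

/-- If a path to `v` avoids the edge to the parent of `v`, its start is inside `T_v`. -/
lemma inSubtree_of_not_edge (hT : T.IsTree) (hvv' : T.Adj v v') {R : T.Walk v' r}
    (hPR : (Walk.cons hvv' R).IsPath) {p : V} (A : T.Walk p v)
    (he : s(v, v') ∉ A.edges) : InSubtree T r v p := by
  obtain ⟨Pr, hPr⟩ := exists_path hT p r
  have hbp : (Walk.cons hvv' R) = (A.reverse.append Pr).bypass :=
    path_unique hT hPR (A.reverse.append Pr).bypass_isPath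
  have h1 : s(v, v') ∈ (A.reverse.append Pr).edges := by
    apply (A.reverse.append Pr).edges_bypass_subset
    rw [← hbp]; simp
  rw [Walk.edges_append, List.mem_append] at h1
  rcases h1 with h1 | h1
  · exact absurd (by simpa [Walk.edges_reverse] using h1) he
  · exact ⟨Pr, hPr, Pr.fst_mem_support_of_mem_edges h1⟩

/-- A path containing the parent edge of `v` crosses the boundary of the subtree
`T_v`: one endpoint is inside, the other outside. -/
lemma crossing (hT : T.IsTree) (hvv' : T.Adj v v') {R : T.Walk v' r}
    (hPR : (Walk.cons hvv' R).IsPath) {p q : V} (W : T.Walk p q) (hW : W.IsPath)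
    (he : s(v, v') ∈ W.edges) :
    (InSubtree T r v p ∧ ¬ InSubtree T r v q) ∨
      (InSubtree T r v q ∧ ¬ InSubtree T r v p) := by
  have hvW : v ∈ W.support := W.fst_mem_support_of_mem_edges he
  have hA : (W.takeUntil v hvW).IsPath := hW.takeUntil hvW
  have hB : (W.dropUntil v hvW).IsPath := hW.dropUntil hvW
  have hnodup : ((W.takeUntil v hvW).edges ++ (W.dropUntil v hvW).edges).Nodup := by
    rw [← Walk.edges_append, Walk.take_spec]
    exact hW.isTrail.edges_nodup
  have hdisj := (List.nodup_append'.mp hnodup).2.2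
  have he' : s(v, v') ∈ (W.takeUntil v hvW).edges ++ (W.dropUntil v hvW).edges := by
    rw [← Walk.edges_append, Walk.take_spec]; exact he
  rcases List.mem_append.mp he' with h | h
  · right
    constructor
    · exact inSubtree_of_not_edge hT hvv' hPR (W.dropUntil v hvW).reverse
        (by simpa [Walk.edges_reverse] using fun hc => hdisj h hc)
    · exact not_inSubtree_of_edge hT hvv' hPR (W.takeUntil v hvW).reverse hA.reverse
        (by simpa [Walk.edges_reverse] using h)
  · left
    constructor
    · exact inSubtree_of_not_edge hT hvv' hPR (W.takeUntil v hvW)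
        (fun hc => hdisj hc h)
    · exact not_inSubtree_of_edge hT hvv' hPR (W.dropUntil v hvW) hB h

end Boundary

/-- In a shadows-minimal solution containing a twin-like link `ab` between two leaves,
no other link of `F` is incident to `a`. -/
lemma deg_one (hT : T.IsTree) {r : V} (hr : ¬ IsLeaf T r) {E F : Finset (Sym2 V)}
    (hF : ShadowsMinimal T E F) {a b : V} (ha : IsLeaf T a) (hb : IsLeaf T b)
    (hab : a ≠ b) (habF : s(a, b) ∈ F) {z : V} (hz : s(a, z) ∈ F) (hza : z ≠ a)
    (hzb : z ≠ b) : False := by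
  have har : a ≠ r := by rintro rfl; exact hr ha
  have hbr : b ≠ r := by rintro rfl; exact hr hb
  obtain ⟨a', haa', ha'⟩ := ha
  -- b is not the neighbour of a
  have hba' : b ≠ a' := by
    rintro rfl
    obtain ⟨P, hP⟩ := exists_path hT a r
    obtain ⟨w, hw, P', hP'⟩ := Walk.exists_eq_cons_of_ne har P
    have hwb : w = b := ha' _ hw
    have hbP : b ∈ P.support := by
      rw [hP']
      simp only [Walk.support_cons, List.mem_cons]
      exact Or.inr (hwb ▸ P'.start_mem_support)
    exact interior_not_leaf P hP hbP hab.symm hbr hb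
  -- decompose the path from a to b
  obtain ⟨Q, hQ⟩ := exists_path hT a b
  obtain ⟨w, hw, q, hQ'⟩ := Walk.exists_eq_cons_of_ne hab Q
  have hwa' : w = a' := ha' _ hw
  have hbw : b ≠ w := by rw [hwa']; exact hba'
  subst hQ'
  have hq : q.IsPath := ((Walk.cons_isPath_iff hw q).mp hQ).1
  have hanq : a ∉ q.support := ((Walk.cons_isPath_iff hw q).mp hQ).2
  -- the shadow b w
  have hshadow : IsShadow T b w a b := by
    refine ⟨hbw, ?_⟩
    rw [ssubset_iff_subset_ne]
    constructor
    · intro e he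
      rw [pathEdges_comm] at he
      rw [mem_pathEdges_iff hT hq] at he
      exact (mem_pathEdges_iff hT hQ).mpr
        (by rw [Walk.edges_cons]; exact List.mem_cons_of_mem _ he)
    · intro hcon
      have h1 : s(a, w) ∈ pathEdges T a b :=
        (mem_pathEdges_iff hT hQ).mpr (by simp)
      rw [← hcon, pathEdges_comm, mem_pathEdges_iff hT hq] at h1
      exact hanq (q.fst_mem_support_of_mem_edges h1)
  have hrepl := hF.2.2.2 a b b w habF hshadow
  apply hrepl
  intro e he
  obtain ⟨l₀, hl₀, hcov⟩ := hF.2.1 e he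
  by_cases hl : l₀ = s(a, b)
  · subst hl
    obtain ⟨u', w', heq, hmem⟩ := hcov
    have hmem' : e ∈ pathEdges T a b := by
      rcases Sym2.eq_iff.mp heq with ⟨h1, h2⟩ | ⟨h1, h2⟩
      · rwa [← h1, ← h2] at hmem
      · rw [← h1, ← h2] at hmem; rwa [pathEdges_comm]
    rw [mem_pathEdges_iff hT hQ, Walk.edges_cons] at hmem'
    rcases List.mem_cons.mp hmem' with hmem' | hmem'
    · -- e = s(a,w), covered by s(a,z)
      refine ⟨s(a, z), ?_, a, z, rfl, ?_⟩
      · have hne : s(a, z) ≠ s(a, b) := by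
          intro hcon
          rcases Sym2.eq_iff.mp hcon with ⟨_, h2⟩ | ⟨h1, _⟩
          · exact hzb h2
          · exact hab h1
        simp only [Finset.coe_insert, Set.mem_insert_iff, Finset.mem_coe]
        exact Or.inr (Finset.mem_erase.mpr ⟨hne, hz⟩)
      · have hza2 : a ≠ z := fun hc => hza hc.symm
        obtain ⟨Z, hZ⟩ := exists_path hT a z
        obtain ⟨w₂, hw₂, Z', hZ'⟩ := Walk.exists_eq_cons_of_ne hza2 Z
        have hw₂w : w₂ = w := (ha' _ hw₂).trans hwa'.symm
        subst hw₂w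
        refine (mem_pathEdges_iff hT hZ).mpr ?_
        rw [hZ', Walk.edges_cons, hmem']
        exact List.mem_cons_self
    · -- e on the path from w to b, covered by s(b,w)
      refine ⟨s(b, w), ?_, b, w, rfl, ?_⟩
      · exact Finset.mem_coe.mpr (Finset.mem_insert_self _ _)
      · rw [pathEdges_comm]
        exact (mem_pathEdges_iff hT hq).mpr hmem'
  · refine ⟨l₀, ?_, hcov⟩
    simp only [Finset.coe_insert, Set.mem_insert_iff, Finset.mem_coe]
    exact Or.inr (Finset.mem_erase.mpr ⟨hl, hl₀⟩)

/-- Two distinct links with endpoints satisfying `P` force the degree sum over `P`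
to be at least two. -/
lemma sum_two {V : Type*} [Fintype V] (F : Finset (Sym2 V)) (P : V → Prop)
    [DecidablePred P]
    {l₁ l₂ : Sym2 V} (h₁ : l₁ ∈ F) (h₂ : l₂ ∈ F) (hne : l₁ ≠ l₂)
    {x y : V} (hy : y ∈ l₁) (hx : x ∈ l₂) (hPy : P y) (hPx : P x) :
    2 ≤ ∑ w : V, (if P w then degF F w else 0) := by
  by_cases hxy : x = y
  · subst hxy
    have h2 : 2 ≤ degF F x := by
      have hsub : ({l₁, l₂} : Finset (Sym2 V)) ⊆ F.filter (fun e => x ∈ e) := by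
        intro l hl
        rcases Finset.mem_insert.mp hl with rfl | hl
        · exact Finset.mem_filter.mpr ⟨h₁, hy⟩
        · rw [Finset.mem_singleton.mp hl]
          exact Finset.mem_filter.mpr ⟨h₂, hx⟩
      calc 2 = ({l₁, l₂} : Finset (Sym2 V)).card := (Finset.card_pair hne).symm
        _ ≤ _ := Finset.card_le_card hsub
    calc 2 ≤ degF F x := h2
      _ = (if P x then degF F x else 0) := by rw [if_pos hPx]
      _ ≤ _ := Finset.single_le_sum (f := fun w => if P w then degF F w else 0)
          (fun i _ => Nat.zero_le _) (Finset.mem_univ x)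
  · have d1 : 1 ≤ degF F x :=
      Finset.card_pos.mpr ⟨l₂, Finset.mem_filter.mpr ⟨h₂, hx⟩⟩
    have d2 : 1 ≤ degF F y :=
      Finset.card_pos.mpr ⟨l₁, Finset.mem_filter.mpr ⟨h₁, hy⟩⟩
    calc 2 ≤ (if P x then degF F x else 0) + (if P y then degF F y else 0) := by
          rw [if_pos hPx, if_pos hPy]; omega
      _ = ∑ w ∈ ({x, y} : Finset V), (if P w then degF F w else 0) :=
          (Finset.sum_pair (f := fun w => if P w then degF F w else 0) hxy).symm
      _ ≤ ∑ w : V, (if P w then degF F w else 0) :=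
          Finset.sum_le_sum_of_subset (Finset.subset_univ _)

end Helpers

/-- if `T_v` (`v ≠ r`) has exactly three leaves `a, b, c`, contains no stem,
`ab ∈ E`, and `T_v` is `c`-closed, then `ab ∈ F` implies
`Σ_{x ∈ T_v ∖ L} deg_F(x) ≥ 2`. -/
theorem statement7 {V : Type*} [Fintype V] (T : SimpleGraph V) (hT : T.IsTree) (r : V)
    (hr : ¬ IsLeaf T r) (E F : Finset (Sym2 V))
    (hlinks : ∀ l ∈ E, ¬ l.IsDiag)
    (hE : ShadowClosed T E)
    (hF : ShadowsMinimal T E F)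
    (v : V) (hv : v ≠ r) (a b c : V)
    (hab : a ≠ b) (hac : a ≠ c) (hbc : b ≠ c)
    (hleaves : ∀ x, (IsLeaf T x ∧ InSubtree T r v x) ↔ (x = a ∨ x = b ∨ x = c))
    (hnostem : ¬ ∃ s a' b', InSubtree T r v s ∧ IsStem T r E s a' b')
    (habE : s(a, b) ∈ E)
    (hclosed : XClosed T r E v c) :
    s(a, b) ∈ F →
      2 ≤ ∑ x : V, (if InSubtree T r v x ∧ ¬ IsLeaf T x then degF F x else 0) := by
  intro habF
  have haL := (hleaves a).mpr (Or.inl rfl)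
  have hbL := (hleaves b).mpr (Or.inr (Or.inl rfl))
  have hcL := (hleaves c).mpr (Or.inr (Or.inr rfl))
  have hcr : c ≠ r := by rintro rfl; exact hr hcL.1
  -- the link of F covering the leaf edge at c
  obtain ⟨n, hcn, -⟩ := hcL.1
  obtain ⟨l₁, hl₁F, hcov₁⟩ := hF.2.1 s(c, n) (T.mem_edgeSet.mpr hcn)
  obtain ⟨u₁, w₁, heq₁, hmem₁⟩ := hcov₁
  obtain ⟨P₁, hP₁, heP₁⟩ := hmem₁
  have hcP₁ : c ∈ P₁.support := P₁.fst_mem_support_of_mem_edges heP₁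
  have hcl₁ : c ∈ l₁ := by
    rw [heq₁, Sym2.mem_iff]
    by_contra hcon
    push_neg at hcon
    exact interior_not_leaf P₁ hP₁ hcP₁ hcon.1 hcon.2 hcL.1
  obtain ⟨y, hl₁eq⟩ := Sym2.mem_iff_exists.mp hcl₁
  have hl₁E : l₁ ∈ E := hF.1 hl₁F
  have hyc : y ≠ c := by
    rintro rfl
    exact hlinks l₁ hl₁E (by rw [hl₁eq]; exact Sym2.mk_isDiag_iff.mpr rfl)
  have hyv : InSubtree T r v y :=
    hclosed l₁ hl₁E hcl₁ y (by rw [hl₁eq]; exact Sym2.mem_mk_right c y)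
  have hl₁cy : s(c, y) ∈ F := hl₁eq ▸ hl₁F
  have hya : y ≠ a := by
    intro h
    rw [h] at hl₁cy
    exact deg_one hT hr hF haL.1 hbL.1 hab habF
      (show s(a, c) ∈ F by rw [Sym2.eq_swap]; exact hl₁cy) hac.symm hbc.symm
  have hyb : y ≠ b := by
    intro h
    rw [h] at hl₁cy
    exact deg_one hT hr hF hbL.1 haL.1 hab.symm
      (show s(b, a) ∈ F by rw [Sym2.eq_swap]; exact habF)
      (show s(b, c) ∈ F by rw [Sym2.eq_swap]; exact hl₁cy) hbc.symm hac.symm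
  have hyleaf : ¬ IsLeaf T y := by
    intro hy
    rcases (hleaves y).mp ⟨hy, hyv⟩ with rfl | rfl | rfl
    · exact hya rfl
    · exact hyb rfl
    · exact hyc rfl
  -- the link of F covering the parent edge of v
  obtain ⟨P, hP⟩ := exists_path hT v r
  obtain ⟨v', hvv', R, hPR⟩ := SimpleGraph.Walk.exists_eq_cons_of_ne hv P
  subst hPR
  obtain ⟨l₂, hl₂F, hcov₂⟩ := hF.2.1 s(v, v') (T.mem_edgeSet.mpr hvv')
  obtain ⟨p₀, q₀, heq₂, hmem₂⟩ := hcov₂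
  obtain ⟨W, hW, heW⟩ := hmem₂
  have hl₂E : l₂ ∈ E := hF.1 hl₂F
  have hcross := crossing hT hvv' hP W hW heW
  have hxz : ∃ x z, l₂ = s(x, z) ∧ InSubtree T r v x ∧ ¬ InSubtree T r v z := by
    rcases hcross with ⟨h1, h2⟩ | ⟨h1, h2⟩
    · exact ⟨p₀, q₀, heq₂, h1, h2⟩
    · exact ⟨q₀, p₀, heq₂.trans (Sym2.eq_swap), h1, h2⟩
  obtain ⟨x, z, hl₂eq, hxin, hzout⟩ := hxz
  have hza : z ≠ a := by rintro rfl; exact hzout haL.2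
  have hzb : z ≠ b := by rintro rfl; exact hzout hbL.2
  have hzc : z ≠ c := by rintro rfl; exact hzout hcL.2
  have hxa : x ≠ a := by
    intro h
    rw [h] at hl₂eq
    exact deg_one hT hr hF haL.1 hbL.1 hab habF (hl₂eq ▸ hl₂F) hza hzb
  have hxb : x ≠ b := by
    intro h
    rw [h] at hl₂eq
    exact deg_one hT hr hF hbL.1 haL.1 hab.symm
      (show s(b, a) ∈ F by rw [Sym2.eq_swap]; exact habF) (hl₂eq ▸ hl₂F) hzb hza
  have hxc : x ≠ c := by
    intro h
    rw [h] at hl₂eq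
    exact hzout (hclosed l₂ hl₂E (by rw [hl₂eq]; exact Sym2.mem_mk_left c z) z
      (by rw [hl₂eq]; exact Sym2.mem_mk_right c z))
  have hxleaf : ¬ IsLeaf T x := by
    intro hx
    rcases (hleaves x).mp ⟨hx, hxin⟩ with rfl | rfl | rfl
    · exact hxa rfl
    · exact hxb rfl
    · exact hxc rfl
  have hl₁l₂ : l₁ ≠ l₂ := by
    intro hcon
    rw [hl₁eq, hl₂eq] at hcon
    rcases Sym2.eq_iff.mp hcon with ⟨h1, h2⟩ | ⟨h1, h2⟩
    · exact hzout (h2 ▸ hyv)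
    · exact hzout (h1 ▸ hcL.2)
  exact sum_two F (fun w => InSubtree T r v w ∧ ¬ IsLeaf T w) hl₁F hl₂F hl₁l₂
    (y := y) (by rw [hl₁eq]; exact Sym2.mem_mk_right c y)
    (x := x) (by rw [hl₂eq]; exact Sym2.mem_mk_left x z)
    ⟨hyv, hyleaf⟩ ⟨hxin, hxleaf⟩
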